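/- Let P be the union of finite point sets P₁, …, Pₜ in the Euclidean plane, and let x₀ ∈ ℝ be such that each Pᵢ contains a point with x-coordinate strictly greater than x₀. For each i, let nᵢ = next(sky(Pᵢ), x₀), and let p* be the highest point among n₁, …, nₜ, breaking ties in favor of larger x-coordinate (that is, (y(nᵢ), x(nᵢ)) ≤ (y(p*), x(p*)) lexicographically for all i). Then p* = next(sky(P), x₀). -/

import Mathlib

abbrev Pt : Type := EuclideanSpace ℝ (Fin 2)

open Classical in
noncomputable def sky (P : Finset Pt) : Finset Pt :=
  P.filter (fun p => ∀ q ∈ P, q ≠ p → q 0 < p 0 ∨ q 1 < p 1)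

open Classical in
lemma mem_sky_iff {Q : Finset Pt} {p : Pt} :
    p ∈ sky Q ↔ p ∈ Q ∧ ∀ q ∈ Q, q ≠ p → q 0 < p 0 ∨ q 1 < p 1 := by
  simp [sky]

lemma pt_ext {p q : Pt} (h0 : p 0 = q 0) (h1 : p 1 = q 1) : p = q := by
  ext i
  fin_cases i
  · exact h0
  · exact h1

open Classical in
lemma exists_sky_dom (Q : Finset Pt) {q : Pt} (hq : q ∈ Q) :
    ∃ r ∈ sky Q, q 0 ≤ r 0 ∧ q 1 ≤ r 1 := by
  set S := Q.filter (fun r => q 0 ≤ r 0 ∧ q 1 ≤ r 1) with hSdef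
  have hS : q ∈ S := by simp [hSdef, hq]
  obtain ⟨r, hrS, hmax⟩ := S.exists_max_image (fun r => r 0 + r 1) ⟨q, hS⟩
  rw [hSdef, Finset.mem_filter] at hrS
  refine ⟨r, mem_sky_iff.mpr ⟨hrS.1, fun s hs hne => ?_⟩, hrS.2⟩
  by_contra h
  push_neg at h
  obtain ⟨h0, h1⟩ := h
  have hsS : s ∈ S := by
    rw [hSdef, Finset.mem_filter]
    exact ⟨hs, hrS.2.1.trans h0, hrS.2.2.trans h1⟩
  have hle := hmax s hsS
  simp only at hle
  have e0 : s 0 = r 0 := le_antisymm (by linarith) h0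
  have e1 : s 1 = r 1 := le_antisymm (by linarith) h1
  exact hne (pt_ext e0 e1)

open Classical in
theorem stmt5 (t : ℕ) (Ps : Fin t → Finset Pt) (P : Finset Pt)
    (hP : P = Finset.univ.biUnion Ps)
    (x₀ : ℝ)
    (n : Fin t → Pt)
    (hn : ∀ i, n i ∈ sky (Ps i) ∧ x₀ < (n i) 0 ∧
      ∀ q ∈ sky (Ps i), x₀ < q 0 → (n i) 0 ≤ q 0)
    (pstar : Pt) (hpstar : ∃ i, pstar = n i)
    (hhighest : ∀ i, (n i) 1 < pstar 1 ∨ ((n i) 1 = pstar 1 ∧ (n i) 0 ≤ pstar 0)) :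
    pstar ∈ sky P ∧ x₀ < pstar 0 ∧ ∀ q ∈ sky P, x₀ < q 0 → pstar 0 ≤ q 0 := by
  obtain ⟨i₀, hi₀⟩ := hpstar
  have hmem : ∀ i, n i ∈ Ps i := fun i => (mem_sky_iff.mp (hn i).1).1
  have hpP : pstar ∈ P := by
    rw [hP]
    exact Finset.mem_biUnion.mpr ⟨i₀, Finset.mem_univ _, hi₀ ▸ hmem i₀⟩
  have hx : x₀ < pstar 0 := hi₀ ▸ (hn i₀).2.1
  have hsky : pstar ∈ sky P := by
    refine mem_sky_iff.mpr ⟨hpP, fun q hq hne => ?_⟩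
    by_contra h
    push_neg at h
    obtain ⟨h0, h1⟩ := h
    rw [hP] at hq
    obtain ⟨j, -, hqj⟩ := Finset.mem_biUnion.mp hq
    obtain ⟨r, hr, hr0, hr1⟩ := exists_sky_dom (Ps j) hqj
    have hnj := hn j
    have hnjsky := mem_sky_iff.mp hnj.1
    have hnjr : (n j) 0 ≤ r 0 := hnj.2.2 r hr (by linarith)
    have hrPj : r ∈ Ps j := (mem_sky_iff.mp hr).1
    by_cases hrn : r = n j
    · -- n j dominates q which dominates pstar
      rcases hhighest j with hlt | ⟨he1, he0⟩
      · rw [← hrn] at hlt; linarith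
      · rw [← hrn] at he1 he0
        have eq0 : q 0 = pstar 0 := le_antisymm (by linarith) h0
        have eq1 : q 1 = pstar 1 := le_antisymm (by linarith) h1
        exact hne (pt_ext eq0 eq1)
    · rcases hnjsky.2 r hrPj hrn with hc | hc
      · linarith
      · rcases hhighest j with hlt | ⟨he1, -⟩ <;> linarith
  refine ⟨hsky, hx, fun q hq hqx => ?_⟩
  by_contra hlt
  push_neg at hlt
  have hqsky := mem_sky_iff.mp hq
  rw [hP] at hqsky
  obtain ⟨j, -, hqj⟩ := Finset.mem_biUnion.mp hqsky.1
  obtain ⟨r, hr, hr0, hr1⟩ := exists_sky_dom (Ps j) hqj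
  have hrP : r ∈ P := by
    rw [hP]
    exact Finset.mem_biUnion.mpr ⟨j, Finset.mem_univ _, (mem_sky_iff.mp hr).1⟩
  have hrq : r = q := by
    by_contra hrq
    rcases (mem_sky_iff.mp hq).2 r hrP hrq with hc | hc <;> linarith
  subst hrq
  have hnj := hn j
  have hnjr : (n j) 0 ≤ r 0 := hnj.2.2 r hr hqx
  have hps : pstar 1 < r 1 := by
    have hne : pstar ≠ r := fun h => by rw [h] at hlt; linarith
    rcases (mem_sky_iff.mp hq).2 pstar hpP hne with hc | hc <;> linarith
  have hnj1 : (n j) 1 ≤ pstar 1 := by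
    rcases hhighest j with h | ⟨h, -⟩ <;> linarith
  have hnjsky := mem_sky_iff.mp hnj.1
  by_cases hrn : r = n j
  · rw [hrn] at hps; linarith
  · rcases hnjsky.2 r (mem_sky_iff.mp hr).1 hrn with hc | hc <;> linarith
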